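/- Let R be a commutative ring and C a poset that is weakly bounded from above and mub-complete. An RC-module M has a finite support of a presentation (FSP) if and only if M is S-determined for some finite subset S ⊆ C. -/

import Mathlib

open CategoryTheory Limits

namespace Persist

variable (R : Type) [CommRing R] (C : Type) [PartialOrder C]

/-- The natural map `colim_{d ∈ S, d < c} M(d) → M(c)`. -/
noncomputable def lambdaMap (M : C ⥤ ModuleCat.{0} R) (S : Set C) (c : C) :
    colimit (ObjectProperty.ι (fun d : C => d ∈ S ∧ d < c) ⋙ M) ⟶ M.obj c :=
  colimit.desc (ObjectProperty.ι (fun d : C => d ∈ S ∧ d < c) ⋙ M)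
    { pt := M.obj c
      ι :=
        { app := fun d => M.map (homOfLE d.property.2.le)
          naturality := fun d d' f => by
            dsimp
            rw [Category.comp_id, ← M.map_comp]
            exact congrArg M.map (Subsingleton.elim _ _) } }

/-- The natural map `colim_{d ∈ S, d ≤ c} M(d) → M(c)`, i.e. the component at `c` of the
counit `ind_S res_S M ⟶ M`. -/
noncomputable def muMap (M : C ⥤ ModuleCat.{0} R) (S : Set C) (c : C) :
    colimit (ObjectProperty.ι (fun d : C => d ∈ S ∧ d ≤ c) ⋙ M) ⟶ M.obj c :=
  colimit.desc (ObjectProperty.ι (fun d : C => d ∈ S ∧ d ≤ c) ⋙ M)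
    { pt := M.obj c
      ι :=
        { app := fun d => M.map (homOfLE d.property.2)
          naturality := fun d d' f => by
            dsimp
            rw [Category.comp_id, ← M.map_comp]
            exact congrArg M.map (Subsingleton.elim _ _) } }

/-- `M` is `S`-generated: the counit `ind_S res_S M ⟶ M` is an epimorphism
(pointwise criterion). -/
def SGenerated (M : C ⥤ ModuleCat.{0} R) (S : Set C) : Prop :=
  ∀ c : C, Epi (muMap R C M S c)

/-- `M` is `S`-presented: the counit `ind_S res_S M ⟶ M` is an isomorphism
(pointwise criterion). -/
def SPresented (M : C ⥤ ModuleCat.{0} R) (S : Set C) : Prop :=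
  ∀ c : C, IsIso (muMap R C M S c)

/-- The set of births of `M` relative to `S`. -/
def births (M : C ⥤ ModuleCat.{0} R) (S : Set C) : Set C :=
  {c : C | ¬ Epi (lambdaMap R C M S c)}

/-- The set of deaths of `M` relative to `S`. -/
def deaths (M : C ⥤ ModuleCat.{0} R) (S : Set C) : Set C :=
  {c : C | ¬ Mono (lambdaMap R C M S c)}

/-- The `S`-splitting of `M` at `c`: the cokernel of `λ_{M,c}`. -/
noncomputable def splitObj (M : C ⥤ ModuleCat.{0} R) (S : Set C) (c : C) : ModuleCat.{0} R :=
  cokernel (lambdaMap R C M S c)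

/-- Functoriality of the `S`-splitting at `c`. -/
noncomputable def splitMap {L M : C ⥤ ModuleCat.{0} R} (f : L ⟶ M) (S : Set C) (c : C) :
    splitObj R C L S c ⟶ splitObj R C M S c :=
  cokernel.map (lambdaMap R C L S c) (lambdaMap R C M S c)
    (colimMap (Functor.whiskerLeft (ObjectProperty.ι (fun d : C => d ∈ S ∧ d < c)) f))
    (f.app c)
    (by
      apply colimit.hom_ext
      intro d
      simp [lambdaMap, f.naturality])

/-- The support of `M`. -/
def supp (M : C ⥤ ModuleCat.{0} R) : Set C :=
  {c : C | ¬ IsZero (M.obj c)}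

/-- A subset of a poset is Artinian if `<` is well-founded on it (no infinite strictly
descending chains). -/
def ArtinianSubset (S : Set C) : Prop :=
  S.WellFoundedOn (· < ·)

/-- The set of minimal upper bounds of `T`. -/
def mubSet (T : Set C) : Set C :=
  {c : C | c ∈ upperBounds T ∧ ∀ d ∈ upperBounds T, d ≤ c → d = c}

/-- The poset `C` is weakly bounded from above if every finite subset has only finitely many
minimal upper bounds. -/
def WeaklyBoundedAbove : Prop :=
  ∀ T : Set C, T.Finite → (mubSet C T).Finite

/-- The poset `C` is mub-complete if for every finite non-empty subset `T` and
every upper bound `c` of `T` there is a minimal upper bound `s` of `T` with `s ≤ c`. -/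
def MubComplete : Prop :=
  ∀ T : Set C, T.Finite → T.Nonempty → ∀ c ∈ upperBounds T, ∃ s ∈ mubSet C T, s ≤ c

/-- The hat operation: the set of minimal upper bounds of non-empty subsets of `S`. -/
def hatSet (S : Set C) : Set C :=
  {c : C | ∃ T : Set C, T ⊆ S ∧ T.Nonempty ∧ c ∈ mubSet C T}

/-- `M` is `S`-determined: `supp M ⊆ ↑S` and whenever `c ≤ d` with
`S ∩ ↓c = S ∩ ↓d`, the map `M(c ≤ d)` is an isomorphism. -/
def SDetermined (M : C ⥤ ModuleCat.{0} R) (S : Set C) : Prop :=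
  supp R C M ⊆ {c : C | ∃ s ∈ S, s ≤ c} ∧
    ∀ (c d : C) (h : c ≤ d), S ∩ Set.Iic c = S ∩ Set.Iic d → IsIso (M.map (homOfLE h))


section Aux

lemma mem_hatSet_self {S : Set C} {s : C} (hs : s ∈ S) : s ∈ hatSet C S :=
  ⟨{s}, by simpa using hs, ⟨s, rfl⟩,
    ⟨fun x hx => le_of_eq hx, fun d hd hds => le_antisymm hds (hd rfl)⟩⟩

lemma exists_le_of_mem_hatSet {S : Set C} {e : C} (he : e ∈ hatSet C S) :
    ∃ s ∈ S, s ≤ e := by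
  obtain ⟨T, hTS, ⟨t, ht⟩, hmub⟩ := he
  exact ⟨t, hTS ht, hmub.1 ht⟩

lemma hatSet_finite (hwba : WeaklyBoundedAbove C) {S : Set C} (hS : S.Finite) :
    (hatSet C S).Finite := by
  have hsub : hatSet C S ⊆ ⋃ T ∈ {T : Set C | T ⊆ S}, mubSet C T := by
    rintro c ⟨T, hTS, _, hc⟩
    exact Set.mem_biUnion hTS hc
  exact Set.Finite.subset (Set.Finite.biUnion hS.finite_subsets
    (fun T hT => hwba T (hS.subset hT))) hsub

lemma exists_mub_le (hmub : MubComplete C) {S : Set C} (hS : S.Finite) {c : C}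
    (hne : (S ∩ Set.Iic c).Nonempty) :
    ∃ m, m ∈ mubSet C (S ∩ Set.Iic c) ∧ m ≤ c ∧ S ∩ Set.Iic m = S ∩ Set.Iic c ∧
      m ∈ hatSet C S := by
  obtain ⟨m, hm, hmc⟩ := hmub (S ∩ Set.Iic c) (hS.inter_of_left _) hne c
    (fun t ht => ht.2)
  refine ⟨m, hm, hmc, ?_, ⟨S ∩ Set.Iic c, Set.inter_subset_left, hne, hm⟩⟩
  ext t
  exact ⟨fun ht => ⟨ht.1, ht.2.trans hmc⟩, fun ht => ⟨ht.1, hm.1 ⟨ht.1, ht.2⟩⟩⟩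

lemma map_homOfLE_comp (M : C ⥤ ModuleCat.{0} R) {x y z : C} (h1 : x ≤ y) (h2 : y ≤ z) :
    M.map (homOfLE h1) ≫ M.map (homOfLE h2) = M.map (homOfLE (h1.trans h2)) := by
  rw [← M.map_comp]; rfl

lemma iota_muMap (M : C ⥤ ModuleCat.{0} R) (S : Set C) (c : C)
    (j : ObjectProperty.FullSubcategory (fun d : C => d ∈ S ∧ d ≤ c)) :
    colimit.ι (ObjectProperty.ι (fun d : C => d ∈ S ∧ d ≤ c) ⋙ M) j ≫
      muMap R C M S c = M.map (homOfLE j.property.2) :=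
  colimit.ι_desc _ _

lemma isZero_colimit_of_empty (M : C ⥤ ModuleCat.{0} R) (P : C → Prop)
    (hP : ∀ e, ¬ P e) :
    IsZero (colimit (ObjectProperty.ι P ⋙ M)) := by
  rw [IsZero.iff_id_eq_zero]
  apply colimit.hom_ext
  intro j
  exact absurd j.property (hP j.obj)

/-- Forward direction: an `S`-presented module is `S`-determined. -/
lemma spresented_sdetermined {M : C ⥤ ModuleCat.{0} R} {S : Set C}
    (h : SPresented R C M S) : SDetermined R C M S := by
  constructor
  · intro c hc
    by_contra hns
    apply hc
    have hz := isZero_colimit_of_empty R C M (fun d : C => d ∈ S ∧ d ≤ c)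
      (fun e he => hns ⟨e, he.1, he.2⟩)
    haveI := h c
    exact hz.of_iso (asIso (muMap R C M S c)).symm
  · intro c d hcd heq
    have hPQ : ∀ e : C, (e ∈ S ∧ e ≤ c) → (e ∈ S ∧ e ≤ d) := by
      intro e he
      have : e ∈ S ∩ Set.Iic d := heq ▸ (⟨he.1, he.2⟩ : e ∈ S ∩ Set.Iic c)
      exact ⟨this.1, this.2⟩
    have hQP : ∀ e : C, (e ∈ S ∧ e ≤ d) → (e ∈ S ∧ e ≤ c) := by
      intro e he
      have : e ∈ S ∩ Set.Iic c := heq.symm ▸ (⟨he.1, he.2⟩ : e ∈ S ∩ Set.Iic d)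
      exact ⟨this.1, this.2⟩
    set Fc := ObjectProperty.ι (fun e : C => e ∈ S ∧ e ≤ c) ⋙ M with hFc
    set Fd := ObjectProperty.ι (fun e : C => e ∈ S ∧ e ≤ d) ⋙ M with hFd
    have hφn : ∀ (j j' : ObjectProperty.FullSubcategory (fun e : C => e ∈ S ∧ e ≤ c)) (f : j ⟶ j'),
        Fc.map f ≫ colimit.ι Fd ⟨j'.obj, hPQ _ j'.property⟩ =
          colimit.ι Fd ⟨j.obj, hPQ _ j.property⟩ ≫ 𝟙 (colimit Fd) := by
      intro j j' f
      rw [Category.comp_id]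
      exact colimit.w Fd (ObjectProperty.homMk
        (X := (⟨j.obj, hPQ _ j.property⟩ : ObjectProperty.FullSubcategory (fun e : C => e ∈ S ∧ e ≤ d)))
        (Y := (⟨j'.obj, hPQ _ j'.property⟩ : ObjectProperty.FullSubcategory (fun e : C => e ∈ S ∧ e ≤ d))) f.hom)
    set φ : colimit Fc ⟶ colimit Fd := colimit.desc Fc
      { pt := colimit Fd
        ι := { app := fun j => colimit.ι Fd ⟨j.obj, hPQ _ j.property⟩
               naturality := hφn } } with hφ
    have hψn : ∀ (j j' : ObjectProperty.FullSubcategory (fun e : C => e ∈ S ∧ e ≤ d)) (f : j ⟶ j'),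
        Fd.map f ≫ colimit.ι Fc ⟨j'.obj, hQP _ j'.property⟩ =
          colimit.ι Fc ⟨j.obj, hQP _ j.property⟩ ≫ 𝟙 (colimit Fc) := by
      intro j j' f
      rw [Category.comp_id]
      exact colimit.w Fc (ObjectProperty.homMk
        (X := (⟨j.obj, hQP _ j.property⟩ : ObjectProperty.FullSubcategory (fun e : C => e ∈ S ∧ e ≤ c)))
        (Y := (⟨j'.obj, hQP _ j'.property⟩ : ObjectProperty.FullSubcategory (fun e : C => e ∈ S ∧ e ≤ c))) f.hom)
    set ψ : colimit Fd ⟶ colimit Fc := colimit.desc Fd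
      { pt := colimit Fc
        ι := { app := fun j => colimit.ι Fc ⟨j.obj, hQP _ j.property⟩
               naturality := hψn } } with hψ
    have hφψ : φ ≫ ψ = 𝟙 (colimit Fc) := by
      apply colimit.hom_ext
      intro j
      rw [Category.comp_id, hφ, ← Category.assoc, colimit.ι_desc]
      dsimp
      rw [hψ, colimit.ι_desc]
    have hψφ : ψ ≫ φ = 𝟙 (colimit Fd) := by
      apply colimit.hom_ext
      intro j
      rw [Category.comp_id, hψ, ← Category.assoc, colimit.ι_desc]
      dsimp
      rw [hφ, colimit.ι_desc]
    haveI : IsIso φ := ⟨ψ, hφψ, hψφ⟩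
    have hcomm : muMap R C M S c ≫ M.map (homOfLE hcd) = φ ≫ muMap R C M S d := by
      apply colimit.hom_ext
      intro j
      rw [← Category.assoc, ← Category.assoc, iota_muMap, hφ, colimit.ι_desc]
      dsimp
      rw [iota_muMap, ← M.map_comp]
      exact congrArg M.map (Subsingleton.elim _ _)
    haveI := h c
    haveI := h d
    have hfinal : M.map (homOfLE hcd) = inv (muMap R C M S c) ≫ φ ≫ muMap R C M S d := by
      rw [← hcomm, IsIso.inv_hom_id_assoc]
    rw [hfinal]
    infer_instance

/-- The key induction for the backward direction: every structure map of the colimit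
over `hatSet (hatSet S) ∩ ↓c` factors canonically through a fixed minimal upper bound
`m` of `S ∩ ↓c`. -/
lemma key_ind (hmub : MubComplete C) {M : C ⥤ ModuleCat.{0} R} {S : Set C}
    (hSfin : S.Finite) (hdet : SDetermined R C M S) {c m : C}
    (hmc : m ≤ c)
    (hmeq : S ∩ Set.Iic m = S ∩ Set.Iic c) (hmhat : m ∈ hatSet C S)
    [IsIso (M.map (homOfLE hmc))] :
    ∀ (n : ℕ) (j : ObjectProperty.FullSubcategory (fun d : C => d ∈ hatSet C (hatSet C S) ∧ d ≤ c)),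
      ((S ∩ Set.Iic c) \ (S ∩ Set.Iic j.obj)).ncard = n →
      colimit.ι (ObjectProperty.ι
          (fun d : C => d ∈ hatSet C (hatSet C S) ∧ d ≤ c) ⋙ M) j
        = M.map (homOfLE j.property.2) ≫ inv (M.map (homOfLE hmc)) ≫
            colimit.ι (ObjectProperty.ι
              (fun d : C => d ∈ hatSet C (hatSet C S) ∧ d ≤ c) ⋙ M)
              ⟨m, mem_hatSet_self C hmhat, hmc⟩ := by
  intro n
  induction n using Nat.strong_induction_on with
  | _ n IH =>
  intro j hjn
  set F := ObjectProperty.ι (fun d : C => d ∈ hatSet C (hatSet C S) ∧ d ≤ c) ⋙ M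
    with hF
  set jm : ObjectProperty.FullSubcategory (fun d : C => d ∈ hatSet C (hatSet C S) ∧ d ≤ c) :=
    ⟨m, mem_hatSet_self C hmhat, hmc⟩ with hjm
  obtain ⟨s', hs'hat, hs'j⟩ := exists_le_of_mem_hatSet C j.property.1
  obtain ⟨s, hsS, hss'⟩ := exists_le_of_mem_hatSet C hs'hat
  have hTjne : (S ∩ Set.Iic j.obj).Nonempty := ⟨s, hsS, hss'.trans hs'j⟩
  obtain ⟨d', hd'mub, hd'j, hd'eq, hd'hat⟩ := exists_mub_le C hmub hSfin hTjne
  have hd'c : d' ≤ c := hd'j.trans j.property.2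
  have hd'S' : d' ∈ hatSet C (hatSet C S) := mem_hatSet_self C hd'hat
  set j' : ObjectProperty.FullSubcategory (fun d : C => d ∈ hatSet C (hatSet C S) ∧ d ≤ c) :=
    ⟨d', hd'S', hd'c⟩ with hj'
  haveI hb : IsIso (M.map (homOfLE hd'j)) := hdet.2 d' j.obj hd'j hd'eq
  have w1 : M.map (homOfLE hd'j) ≫ colimit.ι F j = colimit.ι F j' :=
    colimit.w F (ObjectProperty.homMk (X := j') (Y := j) (homOfLE hd'j))
  have hj1 : colimit.ι F j = inv (M.map (homOfLE hd'j)) ≫ colimit.ι F j' := by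
    rw [← w1, IsIso.inv_hom_id_assoc]
  by_cases hTeq : S ∩ Set.Iic d' = S ∩ Set.Iic c
  · -- top zone: connect `d'` to `m` through a common minimal upper bound `v ≤ c`
    have hub : c ∈ upperBounds {d', m} := by
      rintro x (rfl | rfl)
      · exact hd'c
      · exact hmc
    obtain ⟨v, hv, hvc⟩ := hmub {d', m} (Set.toFinite _) ⟨d', Set.mem_insert _ _⟩ c hub
    have hd'v : d' ≤ v := hv.1 (Set.mem_insert _ _)
    have hmv : m ≤ v := hv.1 (Set.mem_insert_of_mem _ rfl)
    have hvS' : v ∈ hatSet C (hatSet C S) :=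
      ⟨{d', m}, Set.insert_subset_iff.2 ⟨hd'hat, Set.singleton_subset_iff.2 hmhat⟩,
        ⟨d', Set.mem_insert _ _⟩, hv⟩
    set jv : ObjectProperty.FullSubcategory (fun d : C => d ∈ hatSet C (hatSet C S) ∧ d ≤ c) :=
      ⟨v, hvS', hvc⟩ with hjv
    have hvceq : S ∩ Set.Iic v = S ∩ Set.Iic c := by
      apply Set.Subset.antisymm
      · exact fun x hx => ⟨hx.1, hx.2.trans hvc⟩
      · intro x hx
        have hx' : x ∈ S ∩ Set.Iic d' := hTeq ▸ hx
        exact ⟨hx.1, hx'.2.trans hd'v⟩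
    haveI hvciso : IsIso (M.map (homOfLE hvc)) := hdet.2 v c hvc hvceq
    have w2 : M.map (homOfLE hd'v) ≫ colimit.ι F jv = colimit.ι F j' :=
      colimit.w F (ObjectProperty.homMk (X := j') (Y := jv) (homOfLE hd'v))
    have w3 : M.map (homOfLE hmv) ≫ colimit.ι F jv = colimit.ι F jm :=
      colimit.w F (ObjectProperty.homMk (X := jm) (Y := jv) (homOfLE hmv))
    have hpre : (inv (M.map (homOfLE hd'j)) ≫ M.map (homOfLE hd'v)) =
        ((M.map (homOfLE j.property.2) ≫ inv (M.map (homOfLE hmc))) ≫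
          M.map (homOfLE hmv)) := by
      rw [← cancel_mono (M.map (homOfLE hvc))]
      simp only [Category.assoc]
      rw [map_homOfLE_comp R C M hd'v hvc, map_homOfLE_comp R C M hmv hvc]
      show inv (M.map (homOfLE hd'j)) ≫ M.map (homOfLE (hd'v.trans hvc)) =
        M.map (homOfLE j.property.2) ≫ inv (M.map (homOfLE hmc)) ≫ M.map (homOfLE hmc)
      rw [IsIso.inv_hom_id, Category.comp_id, IsIso.inv_comp_eq,
        map_homOfLE_comp R C M hd'j j.property.2]
    rw [hj1, ← w2, ← w3]
    simp only [← Category.assoc]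
    rw [hpre]
  · -- strictly below the top zone: climb using a new element `t` of `S`
    have hsub : S ∩ Set.Iic d' ⊆ S ∩ Set.Iic c := fun x hx => ⟨hx.1, hx.2.trans hd'c⟩
    obtain ⟨t, htc, htd'⟩ := Set.exists_of_ssubset (Set.ssubset_iff_subset_ne.2 ⟨hsub, hTeq⟩)
    have hub : c ∈ upperBounds {d', t} := by
      rintro x (rfl | rfl)
      · exact hd'c
      · exact htc.2
    obtain ⟨e, he, hec⟩ := hmub {d', t} (Set.toFinite _) ⟨d', Set.mem_insert _ _⟩ c hub
    have hd'e : d' ≤ e := he.1 (Set.mem_insert _ _)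
    have hte : t ≤ e := he.1 (Set.mem_insert_of_mem _ rfl)
    have heS' : e ∈ hatSet C (hatSet C S) :=
      ⟨{d', t}, Set.insert_subset_iff.2
          ⟨hd'hat, Set.singleton_subset_iff.2 (mem_hatSet_self C htc.1)⟩,
        ⟨d', Set.mem_insert _ _⟩, he⟩
    set je : ObjectProperty.FullSubcategory (fun d : C => d ∈ hatSet C (hatSet C S) ∧ d ≤ c) :=
      ⟨e, heS', hec⟩ with hje
    have hlt : ((S ∩ Set.Iic c) \ (S ∩ Set.Iic e)).ncard < n := by
      have h1 : ((S ∩ Set.Iic c) \ (S ∩ Set.Iic e)) ⊂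
          ((S ∩ Set.Iic c) \ (S ∩ Set.Iic d')) := by
        constructor
        · exact Set.diff_subset_diff_right (fun x hx => ⟨hx.1, hx.2.trans hd'e⟩)
        · intro hcon
          exact (hcon ⟨htc, htd'⟩).2 ⟨htc.1, hte⟩
      have h2 := Set.ncard_lt_ncard h1 ((hSfin.inter_of_left _).diff)
      rwa [hd'eq, hjn] at h2
    have IHe := IH _ hlt je rfl
    have we : M.map (homOfLE hd'e) ≫ colimit.ι F je = colimit.ι F j' :=
      colimit.w F (ObjectProperty.homMk (X := j') (Y := je) (homOfLE hd'e))
    have hpre : ((inv (M.map (homOfLE hd'j)) ≫ M.map (homOfLE hd'e)) ≫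
        M.map (homOfLE hec)) = M.map (homOfLE j.property.2) := by
      rw [Category.assoc, map_homOfLE_comp, IsIso.inv_comp_eq, map_homOfLE_comp]
    rw [hj1, ← we, IHe]
    simp only [← Category.assoc]
    rw [hpre]

/-- Backward direction: an `S`-determined module (for finite `S`) is presented over
`hatSet (hatSet S)`. -/
lemma sdetermined_spresented (hmub : MubComplete C) {M : C ⥤ ModuleCat.{0} R} {S : Set C}
    (hSfin : S.Finite) (hdet : SDetermined R C M S) :
    SPresented R C M (hatSet C (hatSet C S)) := by
  intro c
  by_cases hne : (S ∩ Set.Iic c).Nonempty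
  · obtain ⟨m, hm, hmc, hmeq, hmhat⟩ := exists_mub_le C hmub hSfin hne
    haveI : IsIso (M.map (homOfLE hmc)) := hdet.2 m c hmc hmeq
    set F := ObjectProperty.ι (fun d : C => d ∈ hatSet C (hatSet C S) ∧ d ≤ c) ⋙ M
      with hF
    set jm : ObjectProperty.FullSubcategory (fun d : C => d ∈ hatSet C (hatSet C S) ∧ d ≤ c) :=
      ⟨m, mem_hatSet_self C hmhat, hmc⟩ with hjm
    set ν : M.obj c ⟶ colimit F := inv (M.map (homOfLE hmc)) ≫ colimit.ι F jm with hν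
    refine ⟨ν, ?_, ?_⟩
    · apply colimit.hom_ext
      intro j
      rw [Category.comp_id, ← Category.assoc, iota_muMap]
      exact (key_ind R C hmub hSfin hdet hmc hmeq hmhat _ j rfl).symm
    · rw [hν, Category.assoc, iota_muMap]
      exact IsIso.inv_hom_id _
  · have hzc : IsZero (M.obj c) := by
      by_contra h
      obtain ⟨s, hsS, hsc⟩ := hdet.1 h
      exact hne ⟨s, hsS, hsc⟩
    have hz := isZero_colimit_of_empty R C M
      (fun d : C => d ∈ hatSet C (hatSet C S) ∧ d ≤ c) ?_
    · have heq : muMap R C M (hatSet C (hatSet C S)) c = (hz.iso hzc).hom :=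
        hz.eq_of_src _ _
      rw [heq]
      infer_instance
    · rintro e ⟨heS', hec⟩
      obtain ⟨s', hs', hs'e⟩ := exists_le_of_mem_hatSet C heS'
      obtain ⟨s, hsS, hss'⟩ := exists_le_of_mem_hatSet C hs'
      exact hne ⟨s, hsS, (hss'.trans hs'e).trans hec⟩

end Aux

/-- If `C` is weakly bounded from above and mub-complete, then an `RC`-module
has a finite support of a presentation (FSP) iff it is `S`-determined for some finite `S`. -/
theorem statement18 (hwba : WeaklyBoundedAbove C) (hmub : MubComplete C)
    (M : C ⥤ ModuleCat.{0} R) :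
    (∃ S : Set C, S.Finite ∧ SPresented R C M S) ↔
      (∃ S : Set C, S.Finite ∧ SDetermined R C M S) := by
  constructor
  · rintro ⟨S, hSfin, hpres⟩
    exact ⟨S, hSfin, spresented_sdetermined R C hpres⟩
  · rintro ⟨S, hSfin, hdet⟩
    exact ⟨hatSet C (hatSet C S), hatSet_finite C hwba (hatSet_finite C hwba hSfin),
      sdetermined_spresented R C hmub hSfin hdet⟩

end Persist
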